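/- Let $l_0 \geq 1$, $m_0 \geq 0$ be natural numbers and let $d : \mathbb{N} \times \mathbb{N} \to \mathbb{R}$ satisfy the homogeneous relation $(ii)H$: $d_{l+1,m+1} - d_{l,m} - d_{l,m+1} + d_{l-1,m} = 0$ for all $l \geq l_0$ and $m \geq m_0$. Then for all $j \geq 1$ and $k \geq 0$ one has $d_{l_0-1+j+k,\,m_0+j} = d_{l_0-1+k,\,m_0} - d_{l_0-1,m_0} + \sum_{i=1}^{j-1}\big(d_{l_0,m_0+i} - d_{l_0-1,m_0+i}\big) + d_{l_0,m_0+j}$. In particular, for each fixed $j$, the sequence $l \mapsto d_{l,m_0+j}$ grows linearly in the horizontal direction whenever $l \mapsto d_{l,m_0}$ is a linear function of $l$. -/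
import Mathlib


/-- Explicit formula in the proof of Theorem 1, part 2, and the resulting linear
growth along each horizontal row when the boundary row is linear. -/
theorem stmt_6 (l₀ m₀ : ℕ) (hl₀ : 1 ≤ l₀) (d : ℕ × ℕ → ℝ)
    (h : ∀ l m : ℕ, l₀ ≤ l → m₀ ≤ m →
      d (l + 1, m + 1) - d (l, m) - d (l, m + 1) + d (l - 1, m) = 0) :
    (∀ j k : ℕ, 1 ≤ j →
      d (l₀ + j + k - 1, m₀ + j) =
        d (l₀ + k - 1, m₀) - d (l₀ - 1, m₀) +
          (∑ i ∈ Finset.Icc 1 (j - 1), (d (l₀, m₀ + i) - d (l₀ - 1, m₀ + i))) +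
          d (l₀, m₀ + j)) ∧
    (∀ j : ℕ, 1 ≤ j → ∀ a b : ℝ,
      (∀ l : ℕ, l₀ - 1 ≤ l → d (l, m₀) = a + b * l) →
      ∃ c : ℝ, ∀ l : ℕ, l₀ + j - 1 ≤ l → d (l, m₀ + j) = c + b * l) := by
  obtain ⟨L, rfl⟩ : ∃ L, l₀ = L + 1 := ⟨l₀ - 1, by omega⟩
  -- invariance of the horizontal difference along diagonals
  have hΔ : ∀ t l m, m₀ ≤ m →
      d (L + 1 + l + t, m + t) - d (L + l + t, m + t)
        = d (L + 1 + l, m) - d (L + l, m) := by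
    intro t
    induction t with
    | zero => intro l m _; simp
    | succ t ih =>
      intro l m hm
      have hrel := h (L + 1 + l + t) (m + t) (by omega) (by omega)
      rw [show L + 1 + l + t - 1 = L + l + t from by omega] at hrel
      rw [show L + 1 + l + (t + 1) = L + 1 + l + t + 1 from by omega,
        show L + l + (t + 1) = L + l + t + 1 from by omega,
        show m + (t + 1) = m + t + 1 from by omega]
      rw [show L + l + t + 1 = L + 1 + l + t from by omega]
      have := ih l m hm
      linarith
  -- horizontal telescoping
  have htel : ∀ n m, d (L + 1 + n, m) - d (L + 1, m)
      = ∑ u ∈ Finset.Icc 1 n, (d (L + 1 + u, m) - d (L + u, m)) := by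
    intro n m
    induction n with
    | zero => simp
    | succ n ih =>
      rw [Finset.sum_Icc_succ_top (by omega)]
      rw [show L + 1 + (n + 1) = L + 1 + n + 1 from by omega,
        show L + (n + 1) = L + n + 1 from by omega] at *
      rw [show L + n + 1 = L + 1 + n from by omega]
      linarith
  -- value on the diagonal
  have hdiag : ∀ j, 1 ≤ j → d (L + j, m₀ + j)
      = (∑ i ∈ Finset.Icc 1 (j - 1), (d (L + 1, m₀ + i) - d (L, m₀ + i)))
        + d (L + 1, m₀ + j) := by
    intro j hj
    have ht := htel (j - 1) (m₀ + j)
    rw [show L + 1 + (j - 1) = L + j from by omega] at ht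
    have hsum : ∑ u ∈ Finset.Icc 1 (j - 1), (d (L + 1 + u, m₀ + j) - d (L + u, m₀ + j))
        = ∑ i ∈ Finset.Icc 1 (j - 1), (d (L + 1, m₀ + i) - d (L, m₀ + i)) := by
      refine Finset.sum_nbij' (fun u => j - u) (fun i => j - i) ?_ ?_ ?_ ?_ ?_
      · intro u hu; simp only [Finset.mem_Icc] at *; omega
      · intro i hi; simp only [Finset.mem_Icc] at *; omega
      · intro u hu; simp only [Finset.mem_Icc] at hu; show j - (j - u) = u; omega
      · intro i hi; simp only [Finset.mem_Icc] at hi; show j - (j - i) = i; omega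
      · intro u hu
        simp only [Finset.mem_Icc] at hu
        have := hΔ u 0 (m₀ + (j - u)) (by omega)
        rw [show m₀ + (j - u) + u = m₀ + j from by omega] at this
        simpa using this
    rw [hsum] at ht
    linarith
  -- translating the diagonal value horizontally
  have hrow : ∀ j k, d (L + j + k, m₀ + j)
      = d (L + j, m₀ + j) + (d (L + k, m₀) - d (L, m₀)) := by
    intro j k
    induction k with
    | zero => simp
    | succ k ih =>
      have hd := hΔ j k m₀ le_rfl
      rw [show L + j + (k + 1) = L + 1 + k + j from by omega,
        show L + (k + 1) = L + 1 + k from by omega]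
      rw [show L + j + k = L + k + j from by omega] at ih
      linarith
  -- the explicit formula
  have hmain : ∀ j k : ℕ, 1 ≤ j →
      d (L + 1 + j + k - 1, m₀ + j) =
        d (L + 1 + k - 1, m₀) - d (L + 1 - 1, m₀) +
          (∑ i ∈ Finset.Icc 1 (j - 1), (d (L + 1, m₀ + i) - d (L + 1 - 1, m₀ + i))) +
          d (L + 1, m₀ + j) := by
    intro j k hj
    rw [show L + 1 + j + k - 1 = L + j + k from by omega,
      show L + 1 + k - 1 = L + k from by omega,
      show L + 1 - 1 = L from by omega]
    rw [hrow j k, hdiag j hj]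
    ring
  refine ⟨hmain, ?_⟩
  intro j hj a b hlin
  refine ⟨(∑ i ∈ Finset.Icc 1 (j - 1), (d (L + 1, m₀ + i) - d (L, m₀ + i)))
      + d (L + 1, m₀ + j) - b * ((L : ℝ) + (j : ℝ)), ?_⟩
  intro l hl
  obtain ⟨k, rfl⟩ : ∃ k, l = L + 1 + j + k - 1 := ⟨l - (L + j), by omega⟩
  have hm := hmain j k hj
  have h1 := hlin (L + 1 + k - 1) (by omega)
  have h2 := hlin (L + 1 - 1) (by omega)
  rw [h1, h2] at hm
  rw [hm]
  rw [show L + 1 + k - 1 = L + k from by omega,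
    show L + 1 - 1 = L from by omega,
    show L + 1 + j + k - 1 = L + j + k from by omega]
  push_cast
  ring
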